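/- Let n ≥ 3 and let A_{n-1} be the (n-1)-variable arithmetic mean, A_{n-1}(y) = (y_1 + ⋯ + y_{n-1})/(n-1). For any tuple X : Fin n → ℝ of positive reals, the iteration X⁰ = X, X^{k+1}_i = A_{n-1}(X^k with i-th coordinate deleted) converges coordinatewise, and each coordinate sequence converges to the n-variable arithmetic mean (X_1 + ⋯ + X_n)/n. -/

import Mathlib

open Filter Topology

/-- For `n = m + 1 ≥ 3`, the deletion iteration associated to the `(n-1)`-variable
arithmetic mean converges in every coordinate to the `n`-variable arithmetic mean. -/
theorem deletion_iteration_arith_mean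
    (m : ℕ) (hm : 2 ≤ m)
    (X : Fin (m + 1) → ℝ) (hX : ∀ i, 0 < X i)
    (Y : ℕ → Fin (m + 1) → ℝ) (hY0 : Y 0 = X)
    (hYrec : ∀ k (i : Fin (m + 1)),
      Y (k + 1) i = (∑ j : Fin m, Y k (i.succAbove j)) / (m : ℝ)) :
    ∀ i, Tendsto (fun k => Y k i) atTop (𝓝 ((∑ j, X j) / ((m : ℝ) + 1))) := by
  have hm0 : (m : ℝ) ≠ 0 := by positivity
  have hm1 : ((m : ℝ) + 1) ≠ 0 := by positivity
  set S : ℝ := ∑ j, X j with hS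
  set L : ℝ := S / ((m : ℝ) + 1) with hL
  set c : ℝ := -1 / (m : ℝ) with hc
  have hSL : S = ((m : ℝ) + 1) * L := by
    rw [hL, mul_div_assoc', mul_comm, mul_div_assoc, div_self hm1, mul_one]
  have closed : ∀ k i, Y k i = L + c ^ k * (X i - L) := by
    intro k
    induction k with
    | zero => intro i; simp [hY0]
    | succ k ih =>
      intro i
      have hsum : ∑ j, Y k j = S := by
        simp only [ih]
        rw [Finset.sum_add_distrib, ← Finset.mul_sum, Finset.sum_sub_distrib]
        simp only [Finset.sum_const, Finset.card_univ, Fintype.card_fin, nsmul_eq_mul]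
        rw [← hS, hSL]
        push_cast
        ring
      have hdel : ∑ j : Fin m, Y k (i.succAbove j) = S - Y k i := by
        have := Fin.sum_univ_succAbove (fun j => Y k j) i
        rw [hsum] at this
        linarith [this]
      rw [hYrec, hdel, ih i]
      rw [hSL]
      field_simp [hc]
      have hmc : (m : ℝ) * c = -1 := by
        rw [hc, mul_div_assoc', mul_neg_one, neg_div, div_self hm0]
      linear_combination (L * c ^ k - c ^ k * X i) * hmc
  intro i
  have hclim : Tendsto (fun k => c ^ k) atTop (𝓝 0) := by
    apply tendsto_pow_atTop_nhds_zero_of_abs_lt_one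
    rw [hc, abs_div, abs_neg, abs_one, abs_of_nonneg (by positivity : (0:ℝ) ≤ (m:ℝ))]
    rw [div_lt_one (by exact_mod_cast lt_of_lt_of_le two_pos hm)]
    exact_mod_cast lt_of_lt_of_le one_lt_two hm
  have : Tendsto (fun k => L + c ^ k * (X i - L)) atTop (𝓝 (L + 0 * (X i - L))) :=
    tendsto_const_nhds.add (hclim.mul_const _)
  simpa [closed] using this
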